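/- Let t not be a root of unity and Z_1,…,Z_l ∈ ℂ* with Z_i/Z_j ∉ t^{ℤ} for i ≠ j. Suppose X, D, Y, T are N×N matrices with Y invertible, satisfying XD = (Z_1^{-1}Y − 1)⋯(Z_l^{-1}Y − 1), DX = (Z_1^{-1}YT − 1)⋯(Z_l^{-1}YT − 1), YX = XYT, YTD = DY, where T is conjugate to diag(t^{-1},…,t^{-1},t^{N−1}). Then the joint action of (X, D, Y, T) on ℂ^N is irreducible. -/

import Mathlib

set_option maxRecDepth 8000
set_option maxHeartbeats 1000000


/- STATEMENT 17: Let t be a nonzero non-root-of-unity, Z_1,…,Z_l ∈ ℂ* with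
Z_i/Z_j ∉ t^ℤ for i ≠ j. If N×N matrices X, D, Y, T with Y invertible satisfy
XD = (Z_1⁻¹Y − 1)⋯(Z_l⁻¹Y − 1), DX = (Z_1⁻¹YT − 1)⋯(Z_l⁻¹YT − 1), YX = XYT,
YTD = DY, and T is conjugate to diag(t⁻¹,…,t⁻¹,t^{N−1}), then the joint action of
(X, D, Y, T) on ℂ^N is irreducible. -/

set_option maxRecDepth 8000
set_option maxHeartbeats 1000000
open Module


lemma prod_aux {V : Type} [AddCommGroup V] [Module ℂ V] (W : Submodule ℂ V)
    (y : Module.End ℂ V) (hyW : ∀ w ∈ W, y w ∈ W)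
    {l : ℕ} (c : Fin l → ℂ) (v : V) (μ : ℂ) (hv : y v - μ • v ∈ W) :
    (List.ofFn (fun i => c i • y - 1)).prod v - (∏ i, (c i * μ - 1)) • v ∈ W := by
  induction l with
  | zero => simpa using W.zero_mem
  | succ l ih =>
    have h1 : (List.ofFn (fun i : Fin (l+1) => c i • y - 1)).prod
        = (c 0 • y - 1) * (List.ofFn (fun i : Fin l => c i.succ • y - 1)).prod := by
      rw [List.ofFn_succ, List.prod_cons]
    set P := (List.ofFn (fun i : Fin l => c i.succ • y - 1)).prod with hP
    set a := ∏ i : Fin l, (c i.succ * μ - 1) with ha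
    obtain ⟨w₀, hw₀mem, hPv⟩ : ∃ w, w ∈ W ∧ P v = a • v + w :=
      ⟨_, ih (fun i => c i.succ), by abel⟩
    obtain ⟨w₁, hw₁mem, hyv⟩ : ∃ w, w ∈ W ∧ y v = μ • v + w := ⟨_, hv, by abel⟩
    have hprod : (∏ i : Fin (l+1), (c i * μ - 1)) = (c 0 * μ - 1) * a := by
      rw [Fin.prod_univ_succ]
    rw [h1, hprod]
    have key : ((c 0 • y - 1) * P) v - ((c 0 * μ - 1) * a) • v
        = (c 0 * a) • w₁ + c 0 • y w₀ - w₀ := by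
      have h2 : ((c 0 • y - 1) * P) v = c 0 • y (P v) - P v := by
        simp [Module.End.mul_apply]
      have hyPv : y (P v) = a • (μ • v) + (a • w₁ + y w₀) := by
        rw [hPv, map_add, map_smul, hyv, smul_add]; abel
      rw [h2, hyPv, hPv]
      have e1 : ((c 0 * μ - 1) * a) • v = c 0 • (a • (μ • v)) - a • v := by
        rw [sub_mul, one_mul, sub_smul, smul_smul, smul_smul]; ring_nf
      rw [e1, smul_add, smul_add]
      simp only [smul_smul]
      abel
    rw [key]
    exact W.sub_mem (W.add_mem (W.smul_mem _ hw₁mem) (W.smul_mem _ (hyW _ hw₀mem))) hw₀mem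



lemma core {V : Type} [AddCommGroup V] [Module ℂ V] [FiniteDimensional ℂ V]
    (t : ℂ) (ht0 : t ≠ 0) (htroot : ∀ n : ℕ, n ≠ 0 → t ^ n ≠ 1)
    {l : ℕ} (Z : Fin l → ℂ) (hZ : ∀ i, Z i ≠ 0)
    (hZt : ∀ i j, i ≠ j → ∀ n : ℤ, Z i ≠ t ^ n * Z j)
    (x d y : Module.End ℂ V) (hy : Function.Bijective y)
    (hyd : ∀ v, y (d v) = t • d (y v))
    (hyx : ∀ v, y (x v) = t⁻¹ • x (y v))
    (hxd : ∀ (v : V) (μ : ℂ), y v = μ • v → x (d v) = (∏ i, ((Z i)⁻¹ * μ - 1)) • v)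
    (hdx : ∀ (v : V) (μ : ℂ), y v = μ • v → d (x v) = (∏ i, ((Z i)⁻¹ * (t⁻¹ * μ) - 1)) • v)
    (v0 : V) : v0 = 0 := by
  classical
  by_contra hv0
  have hnt : Nontrivial V := nontrivial_of_ne v0 0 hv0
  have hpow : ∀ a b : ℕ, t ^ a = t ^ b → a = b := by
    have key : ∀ a b : ℕ, a ≤ b → t ^ a = t ^ b → a = b := by
      intro a b hab h
      have h2 : t ^ b = t ^ a * t ^ (b - a) := by
        rw [← pow_add]; congr 1; omega
      have h3 : t ^ (b - a) = 1 :=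
        mul_left_cancel₀ (pow_ne_zero a ht0) (by rw [← h2, ← h, mul_one])
      by_contra hne
      exact htroot (b - a) (by omega) h3
    intro a b h
    rcases le_total a b with hab | hab
    · exact key a b hab h
    · exact (key b a hab h.symm).symm
  have hS : Set.Finite (fun μ => y.HasEigenvalue μ) := Module.End.finite_hasEigenvalue y
  have hne : ∀ μ : ℂ, y.HasEigenvalue μ → μ ≠ 0 := by
    intro μ h h0
    obtain ⟨w, hw⟩ := h.exists_hasEigenvector
    have h1 := hw.apply_eq_smul
    rw [h0, zero_smul] at h1
    exact hw.2 (hy.injective (by simpa using h1))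
  obtain ⟨μ0, hμ0⟩ := Module.End.exists_eigenvalue y
  have hstep : ∃ μ, y.HasEigenvalue μ ∧ ¬ y.HasEigenvalue (t * μ) := by
    by_contra h
    push_neg at h
    have hall : ∀ n : ℕ, y.HasEigenvalue (t ^ n * μ0) := by
      intro n
      induction n with
      | zero => simpa using hμ0
      | succ n ih =>
        have h2 := h _ ih
        rwa [← mul_assoc, ← pow_succ'] at h2
    exact Set.infinite_of_injective_forall_mem
      (f := fun n : ℕ => t ^ n * μ0)
      (fun a b hab => hpow a b (mul_right_cancel₀ (hne _ hμ0) hab)) hall hS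
  obtain ⟨μ, hμ, hμt⟩ := hstep
  obtain ⟨w, hw⟩ := hμ.exists_hasEigenvector
  have hwy : y w = μ • w := hw.apply_eq_smul
  have hw0 : w ≠ 0 := hw.2
  -- D kills w
  have hdw : d w = 0 := by
    by_contra hdw
    refine hμt (Module.End.hasEigenvalue_of_hasEigenvector (x := d w)
      ⟨Module.End.mem_eigenspace_iff.2 ?_, hdw⟩)
    rw [hyd, hwy, map_smul, smul_smul]
  -- μ = Z j
  have h0 : (∏ i, ((Z i)⁻¹ * μ - 1)) • w = 0 := by
    rw [← hxd w μ hwy, hdw, map_zero]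
  have hprod0 : (∏ i, ((Z i)⁻¹ * μ - 1)) = 0 :=
    (smul_eq_zero.1 h0).resolve_right hw0
  obtain ⟨j, -, hj⟩ := Finset.prod_eq_zero_iff.1 hprod0
  have hμZ : μ = Z j := ((inv_mul_eq_one₀ (hZ j)).1 (sub_eq_zero.mp hj)).symm
  -- chain of eigenvectors
  have hchain : ∀ n : ℕ, y ((x ^ n) w) = ((t⁻¹) ^ n * μ) • (x ^ n) w := by
    intro n
    induction n with
    | zero => simpa using hwy
    | succ n ih =>
      have hx1 : (x ^ (n+1)) w = x ((x ^ n) w) := by rw [pow_succ']; rfl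
      rw [hx1, hyx, ih, map_smul, smul_smul, ← mul_assoc, ← pow_succ']
  have hterm : ∃ n : ℕ, (x ^ n) w = 0 := by
    by_contra h
    push_neg at h
    have hallne : ∀ n : ℕ, y.HasEigenvalue ((t⁻¹) ^ n * μ) := fun n =>
      Module.End.hasEigenvalue_of_hasEigenvector
        ⟨Module.End.mem_eigenspace_iff.2 (hchain n), h n⟩
    refine Set.infinite_of_injective_forall_mem
      (f := fun n : ℕ => (t⁻¹) ^ n * μ) ?_ hallne hS
    intro a b hab
    simp only at hab
    have h2 := mul_right_cancel₀ (hne μ hμ) hab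
    apply hpow
    rw [inv_pow, inv_pow] at h2
    exact inv_injective h2
  set n := Nat.find hterm with hn
  have hnspec : (x ^ n) w = 0 := Nat.find_spec hterm
  have hn0 : n ≠ 0 := by
    intro h
    rw [h, pow_zero] at hnspec
    exact hw0 (by simpa using hnspec)
  obtain ⟨m, hm⟩ : ∃ m, n = m + 1 := ⟨n - 1, by omega⟩
  have hw' : (x ^ m) w ≠ 0 := Nat.find_min hterm (by omega)
  have hxw' : x ((x ^ m) w) = 0 := by
    have : (x ^ (m+1)) w = x ((x ^ m) w) := by rw [pow_succ']; rfl
    rw [← this, ← hm]; exact hnspec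
  have heig := hchain m
  have h2 : (∏ i, ((Z i)⁻¹ * (t⁻¹ * ((t⁻¹) ^ m * μ)) - 1)) • (x ^ m) w = 0 := by
    rw [← hdx _ _ heig, hxw', map_zero]
  have hprod2 : (∏ i, ((Z i)⁻¹ * (t⁻¹ * ((t⁻¹) ^ m * μ)) - 1)) = 0 :=
    (smul_eq_zero.1 h2).resolve_right hw'
  obtain ⟨k, -, hk⟩ := Finset.prod_eq_zero_iff.1 hprod2
  have h3 : (Z k)⁻¹ * (t⁻¹ * ((t⁻¹) ^ m * μ)) = 1 := sub_eq_zero.mp hk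
  have h4 : μ = Z k * (t * t ^ m) := by
    rw [inv_pow] at h3
    field_simp at h3
    rw [div_eq_iff (hZ k)] at h3; rw [h3]; ring
  have h5 : Z j = t ^ (m + 1) * Z k := by
    rw [← hμZ, h4, pow_succ]; ring
  by_cases hjk : j = k
  · subst hjk
    have h6 : t ^ (m + 1) * Z j = 1 * Z j := by rw [one_mul, ← h5]
    exact htroot (m + 1) (by omega) (mul_right_cancel₀ (hZ j) h6)
  · exact hZt j k hjk ((m + 1 : ℕ) : ℤ) (by rw [zpow_natCast]; exact h5)



lemma matprod_eigen' {N l : ℕ} (W : Submodule ℂ (Fin N → ℂ)) (M : Matrix (Fin N) (Fin N) ℂ)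
    (hM : ∀ w ∈ W, M.mulVec w ∈ W) (c : Fin l → ℂ) (v : Fin N → ℂ) (μ : ℂ)
    (hv : M.mulVec v - μ • v ∈ W) :
    ((List.ofFn fun i => c i • M - 1).prod).mulVec v - (∏ i, (c i * μ - 1)) • v ∈ W := by
  have hmap : (List.ofFn fun i => c i • M - 1).map Matrix.toLinAlgEquiv'
      = List.ofFn fun i => c i • Matrix.toLinAlgEquiv' M - 1 := by
    rw [List.map_ofFn]; congr 1; funext i
    simp [Function.comp, map_sub, map_smul, map_one]
  have hbridge : ((List.ofFn fun i => c i • M - 1).prod).mulVec v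
      = ((List.ofFn fun i => c i • Matrix.toLinAlgEquiv' M - 1).prod) v := by
    rw [← Matrix.toLinAlgEquiv'_apply, map_list_prod, hmap]
  rw [hbridge]
  exact prod_aux W (Matrix.toLinAlgEquiv' M)
    (by simpa [Matrix.toLinAlgEquiv'_apply] using hM) c v μ
    (by simpa [Matrix.toLinAlgEquiv'_apply] using hv)

theorem statement17 (N l : ℕ) (hN : 0 < N) (t : ℂ) (ht0 : t ≠ 0)
    (htroot : ∀ n : ℕ, n ≠ 0 → t ^ n ≠ 1)
    (Z : Fin l → ℂ) (hZ : ∀ i, Z i ≠ 0)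
    (hZt : ∀ i j : Fin l, i ≠ j → ∀ n : ℤ, Z i ≠ t ^ n * Z j)
    (X D Y T : Matrix (Fin N) (Fin N) ℂ)
    (hY : IsUnit Y)
    (hXD : X * D = ((List.ofFn (fun i : Fin l => (Z i)⁻¹ • Y - 1)).prod))
    (hDX : D * X = ((List.ofFn (fun i : Fin l => (Z i)⁻¹ • (Y * T) - 1)).prod))
    (hYX : Y * X = X * Y * T)
    (hYTD : Y * T * D = D * Y)
    (hT : ∃ P : (Matrix (Fin N) (Fin N) ℂ)ˣ,
      T = (P : Matrix (Fin N) (Fin N) ℂ) *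
        Matrix.diagonal (fun i : Fin N => if (i : ℕ) = N - 1 then t ^ (N - 1) else t⁻¹) *
        ((P⁻¹ : (Matrix (Fin N) (Fin N) ℂ)ˣ) : Matrix (Fin N) (Fin N) ℂ)) :
    ∀ W : Submodule ℂ (Fin N → ℂ),
      (∀ v ∈ W, X.mulVec v ∈ W) → (∀ v ∈ W, D.mulVec v ∈ W) →
      (∀ v ∈ W, Y.mulVec v ∈ W) → (∀ v ∈ W, T.mulVec v ∈ W) →
      W = ⊥ ∨ W = ⊤ := by
  intro W hWX hWD hWY hWT
  classical
  obtain ⟨P, hP⟩ := hT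
  set Pm : Matrix (Fin N) (Fin N) ℂ := (P : Matrix (Fin N) (Fin N) ℂ) with hPm
  set Pinv : Matrix (Fin N) (Fin N) ℂ := ((P⁻¹ : (Matrix (Fin N) (Fin N) ℂ)ˣ) : Matrix (Fin N) (Fin N) ℂ) with hPi
  have hPPi : Pm * Pinv = 1 := P.mul_inv
  set j : Fin N := ⟨N - 1, by omega⟩ with hj
  set p : Fin N → ℂ := Pm.mulVec (Pi.single j 1) with hp
  -- the key projection computation
  have hπ : ∀ v : Fin N → ℂ, T.mulVec v - t⁻¹ • v
      = ((t ^ (N - 1) - t⁻¹) * (Pinv.mulVec v j)) • p := by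
    intro v
    have hv1 : Pm.mulVec (Pinv.mulVec v) = v := by
      rw [Matrix.mulVec_mulVec, hPPi, Matrix.one_mulVec]
    have hTv : T.mulVec v =
        Pm.mulVec ((Matrix.diagonal (fun i : Fin N => if (i : ℕ) = N - 1 then t ^ (N - 1) else t⁻¹)).mulVec (Pinv.mulVec v)) := by
      rw [Matrix.mulVec_mulVec, Matrix.mulVec_mulVec, hP]
    have hinner : (Matrix.diagonal (fun i : Fin N => if (i : ℕ) = N - 1 then t ^ (N - 1) else t⁻¹)).mulVec (Pinv.mulVec v)
        - t⁻¹ • Pinv.mulVec v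
        = ((t ^ (N - 1) - t⁻¹) * (Pinv.mulVec v j)) • (Pi.single j 1 : Fin N → ℂ) := by
      funext i
      by_cases hi : i = j
      · have hNi : ((i : ℕ) = N - 1) := by rw [hi]
        simp only [Pi.sub_apply, Matrix.mulVec_diagonal, Pi.smul_apply, smul_eq_mul,
          hi, Pi.single_eq_same]
        simp only [hi] at hNi; rw [if_pos hNi]
        ring
      · have hni : ¬ ((i : ℕ) = N - 1) := by
          intro h; apply hi; apply Fin.ext; simp [hj, h]
        simp only [Pi.sub_apply, Matrix.mulVec_diagonal, Pi.smul_apply, smul_eq_mul,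
          Pi.single_eq_of_ne hi]
        rw [if_neg hni]
        ring
    calc T.mulVec v - t⁻¹ • v
        = Pm.mulVec ((Matrix.diagonal (fun i : Fin N => if (i : ℕ) = N - 1 then t ^ (N - 1) else t⁻¹)).mulVec (Pinv.mulVec v)
            - t⁻¹ • Pinv.mulVec v) := by
          rw [Matrix.mulVec_sub, Matrix.mulVec_smul, hv1, hTv]
      _ = ((t ^ (N - 1) - t⁻¹) * (Pinv.mulVec v j)) • p := by
          rw [hinner, Matrix.mulVec_smul, hp]
  -- invertibility data for Y
  obtain ⟨U, hU⟩ := hY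
  set Yi : Matrix (Fin N) (Fin N) ℂ := ((U⁻¹ : (Matrix (Fin N) (Fin N) ℂ)ˣ) : Matrix (Fin N) (Fin N) ℂ) with hYi
  have hYYi : Y * Yi = 1 := by rw [← hU]; exact U.mul_inv
  have hYiY : Yi * Y = 1 := by rw [← hU]; exact U.inv_mul
  have hYinj : Function.Injective (Y.mulVec) := by
    intro a b hab
    have := congrArg (Yi.mulVec) hab
    rwa [Matrix.mulVec_mulVec, Matrix.mulVec_mulVec, hYiY, Matrix.one_mulVec,
      Matrix.one_mulVec] at this
  by_cases hA : ∀ v ∈ W, T.mulVec v = t⁻¹ • v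
  · -- Case A : T acts as t⁻¹ on W; W must be ⊥
    left
    rw [eq_bot_iff]
    intro v hv
    have hXr : ∀ w ∈ W, X.mulVecLin w ∈ W := by
      simpa [Matrix.mulVecLin_apply] using hWX
    have hDr : ∀ w ∈ W, D.mulVecLin w ∈ W := by
      simpa [Matrix.mulVecLin_apply] using hWD
    have hYr : ∀ w ∈ W, Y.mulVecLin w ∈ W := by
      simpa [Matrix.mulVecLin_apply] using hWY
    set x' : Module.End ℂ W := X.mulVecLin.restrict hXr with hx'
    set d' : Module.End ℂ W := D.mulVecLin.restrict hDr with hd'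
    set y' : Module.End ℂ W := Y.mulVecLin.restrict hYr with hy'
    have hval : ∀ (w : W), (↑(x' w) : Fin N → ℂ) = X.mulVec ↑w := fun w => rfl
    have hy'inj : Function.Injective y' := by
      intro a b hab
      apply Subtype.ext
      apply hYinj
      exact congrArg Subtype.val hab
    have hy'bij : Function.Bijective y' :=
      ⟨hy'inj, LinearMap.injective_iff_surjective.1 hy'inj⟩
    have key : ∀ w : W, w = 0 := by
      intro w
      apply core t ht0 htroot Z hZ hZt x' d' y' hy'bij
      · -- hyd
        intro u
        apply Subtype.ext
        show Y.mulVec (D.mulVec ↑u) = t • D.mulVec (Y.mulVec ↑u)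
        have h1 : Y.mulVec (T.mulVec (D.mulVec ↑u)) = D.mulVec (Y.mulVec ↑u) := by
          simp only [Matrix.mulVec_mulVec]
          rw [← mul_assoc, hYTD]
        rw [hA _ (hWD _ u.2), Matrix.mulVec_smul] at h1
        rw [← h1, smul_smul, mul_inv_cancel₀ ht0, one_smul]
      · -- hyx
        intro u
        apply Subtype.ext
        show Y.mulVec (X.mulVec ↑u) = t⁻¹ • X.mulVec (Y.mulVec ↑u)
        have h1 : Y.mulVec (X.mulVec ↑u) = X.mulVec (Y.mulVec (T.mulVec ↑u)) := by
          simp only [Matrix.mulVec_mulVec]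
          rw [hYX, mul_assoc]
        rw [h1, hA _ u.2, Matrix.mulVec_smul, Matrix.mulVec_smul]
      · -- hxd
        intro u μ hu
        have huc : Y.mulVec ↑u = μ • (↑u : Fin N → ℂ) := congrArg Subtype.val hu
        apply Subtype.ext
        show X.mulVec (D.mulVec ↑u) = ((∏ i, ((Z i)⁻¹ * μ - 1)) • (↑u : Fin N → ℂ))
        have h1 := matprod_eigen' (N := N) ⊥ Y (fun w hw => by simp_all)
          (fun i => (Z i)⁻¹) ↑u μ (by rw [huc]; simp)
        rw [Submodule.mem_bot, sub_eq_zero] at h1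
        rw [Matrix.mulVec_mulVec, hXD, h1]
      · -- hdx
        intro u μ hu
        have huc : Y.mulVec ↑u = μ • (↑u : Fin N → ℂ) := congrArg Subtype.val hu
        apply Subtype.ext
        show D.mulVec (X.mulVec ↑u) = ((∏ i, ((Z i)⁻¹ * (t⁻¹ * μ) - 1)) • (↑u : Fin N → ℂ))
        have heig : (Y * T).mulVec ↑u - (t⁻¹ * μ) • (↑u : Fin N → ℂ) ∈ (⊥ : Submodule ℂ (Fin N → ℂ)) := by
          rw [Submodule.mem_bot, sub_eq_zero, ← Matrix.mulVec_mulVec, hA _ u.2,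
            Matrix.mulVec_smul, huc, smul_smul]
        have h1 := matprod_eigen' (N := N) ⊥ (Y * T) (fun w hw => by simp_all)
          (fun i => (Z i)⁻¹) ↑u (t⁻¹ * μ) heig
        rw [Submodule.mem_bot, sub_eq_zero] at h1
        rw [Matrix.mulVec_mulVec, hDX, h1]
    have := key ⟨v, hv⟩
    simpa [Submodule.mem_bot] using congrArg Subtype.val this
  · -- Case B : W contains the special eigenvector; W must be ⊤
    right
    push_neg at hA
    obtain ⟨v₀, hv₀W, hv₀⟩ := hA
    have hs₀ : (t ^ (N - 1) - t⁻¹) * (Pinv.mulVec v₀ j) ≠ 0 := by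
      intro h
      apply hv₀
      have := hπ v₀
      rw [h, zero_smul, sub_eq_zero] at this
      exact this
    have hpW : p ∈ W := by
      have h1 : T.mulVec v₀ - t⁻¹ • v₀ = ((t ^ (N - 1) - t⁻¹) * (Pinv.mulVec v₀ j)) • p := hπ v₀
      have h2 : p = ((t ^ (N - 1) - t⁻¹) * (Pinv.mulVec v₀ j))⁻¹ • (T.mulVec v₀ - t⁻¹ • v₀) := by
        rw [h1, smul_smul, inv_mul_cancel₀ hs₀, one_smul]
      rw [h2]
      exact W.smul_mem _ (W.sub_mem (hWT _ hv₀W) (W.smul_mem _ hv₀W))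
    have hπW : ∀ v : Fin N → ℂ, T.mulVec v - t⁻¹ • v ∈ W := by
      intro v
      rw [hπ v]
      exact W.smul_mem _ hpW
    -- quotient setup
    have hleX : W ≤ W.comap X.mulVecLin := by
      intro w hw; simpa [Matrix.mulVecLin_apply] using hWX w hw
    have hleD : W ≤ W.comap D.mulVecLin := by
      intro w hw; simpa [Matrix.mulVecLin_apply] using hWD w hw
    have hleY : W ≤ W.comap Y.mulVecLin := by
      intro w hw; simpa [Matrix.mulVecLin_apply] using hWY w hw
    set x' : Module.End ℂ ((Fin N → ℂ) ⧸ W) := W.mapQ W X.mulVecLin hleX with hx'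
    set d' : Module.End ℂ ((Fin N → ℂ) ⧸ W) := W.mapQ W D.mulVecLin hleD with hd'
    set y' : Module.End ℂ ((Fin N → ℂ) ⧸ W) := W.mapQ W Y.mulVecLin hleY with hy'
    have hmkx : ∀ v, x' (Submodule.Quotient.mk v) = Submodule.Quotient.mk (X.mulVec v) := by
      intro v; rw [hx', Submodule.mapQ_apply, Matrix.mulVecLin_apply]
    have hmkd : ∀ v, d' (Submodule.Quotient.mk v) = Submodule.Quotient.mk (D.mulVec v) := by
      intro v; rw [hd', Submodule.mapQ_apply, Matrix.mulVecLin_apply]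
    have hmky : ∀ v, y' (Submodule.Quotient.mk v) = Submodule.Quotient.mk (Y.mulVec v) := by
      intro v; rw [hy', Submodule.mapQ_apply, Matrix.mulVecLin_apply]
    have hy'surj : Function.Surjective y' := by
      intro q
      obtain ⟨v, rfl⟩ := Submodule.Quotient.mk_surjective W q
      refine ⟨Submodule.Quotient.mk (Yi.mulVec v), ?_⟩
      rw [hmky, Matrix.mulVec_mulVec, hYYi, Matrix.one_mulVec]
    have hy'bij : Function.Bijective y' :=
      ⟨LinearMap.injective_iff_surjective.2 hy'surj, hy'surj⟩
    have key : ∀ q : (Fin N → ℂ) ⧸ W, q = 0 := by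
      intro q
      apply core t ht0 htroot Z hZ hZt x' d' y' hy'bij
      · -- hyd
        intro u
        obtain ⟨v, rfl⟩ := Submodule.Quotient.mk_surjective W u
        rw [hmkd, hmky, hmky, hmkd, ← Submodule.Quotient.mk_smul, Submodule.Quotient.eq]
        obtain ⟨w, hwW, hTDv⟩ : ∃ w, w ∈ W ∧ T.mulVec (D.mulVec v) = t⁻¹ • D.mulVec v + w :=
          ⟨_, hπW (D.mulVec v), by abel⟩
        have h1 : Y.mulVec (T.mulVec (D.mulVec v)) = D.mulVec (Y.mulVec v) := by
          simp only [Matrix.mulVec_mulVec]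
          rw [← mul_assoc, hYTD]
        rw [hTDv] at h1
        simp only [Matrix.mulVec_add, Matrix.mulVec_smul] at h1
        have h2 : Y.mulVec (D.mulVec v) - t • D.mulVec (Y.mulVec v) = -(t • Y.mulVec w) := by
          rw [← h1, smul_add, smul_smul, mul_inv_cancel₀ ht0, one_smul]
          abel
        rw [h2]
        exact W.neg_mem (W.smul_mem _ (hWY _ hwW))
      · -- hyx
        intro u
        obtain ⟨v, rfl⟩ := Submodule.Quotient.mk_surjective W u
        rw [hmkx, hmky, hmky, hmkx, ← Submodule.Quotient.mk_smul, Submodule.Quotient.eq]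
        obtain ⟨w, hwW, hTv⟩ : ∃ w, w ∈ W ∧ T.mulVec v = t⁻¹ • v + w :=
          ⟨_, hπW v, by abel⟩
        have h1 : Y.mulVec (X.mulVec v) = X.mulVec (Y.mulVec (T.mulVec v)) := by
          simp only [Matrix.mulVec_mulVec]
          rw [hYX, mul_assoc]
        rw [hTv] at h1
        simp only [Matrix.mulVec_add, Matrix.mulVec_smul] at h1
        have h2 : Y.mulVec (X.mulVec v) - t⁻¹ • X.mulVec (Y.mulVec v)
            = X.mulVec (Y.mulVec w) := by rw [h1]; abel
        rw [h2]
        exact hWX _ (hWY _ hwW)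
      · -- hxd
        intro u μ hu
        obtain ⟨v, rfl⟩ := Submodule.Quotient.mk_surjective W u
        rw [hmky, ← Submodule.Quotient.mk_smul, Submodule.Quotient.eq] at hu
        rw [hmkd, hmkx, ← Submodule.Quotient.mk_smul, Submodule.Quotient.eq]
        have h1 := matprod_eigen' W Y hWY (fun i => (Z i)⁻¹) v μ hu
        rwa [← hXD, ← Matrix.mulVec_mulVec] at h1
      · -- hdx
        intro u μ hu
        obtain ⟨v, rfl⟩ := Submodule.Quotient.mk_surjective W u
        rw [hmky, ← Submodule.Quotient.mk_smul, Submodule.Quotient.eq] at hu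
        rw [hmkx, hmkd, ← Submodule.Quotient.mk_smul, Submodule.Quotient.eq]
        have hYT : ∀ w ∈ W, (Y * T).mulVec w ∈ W := by
          intro w hw
          rw [← Matrix.mulVec_mulVec]
          exact hWY _ (hWT _ hw)
        have heig : (Y * T).mulVec v - (t⁻¹ * μ) • v ∈ W := by
          obtain ⟨w, hwW, hTv⟩ : ∃ w, w ∈ W ∧ T.mulVec v = t⁻¹ • v + w :=
            ⟨_, hπW v, by abel⟩
          obtain ⟨w', hw'W, hYv⟩ : ∃ w', w' ∈ W ∧ Y.mulVec v = μ • v + w' :=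
            ⟨_, hu, by abel⟩
          have h3 : (Y * T).mulVec v - (t⁻¹ * μ) • v = t⁻¹ • w' + Y.mulVec w := by
            rw [← Matrix.mulVec_mulVec, hTv, Matrix.mulVec_add, Matrix.mulVec_smul, hYv,
              smul_add, smul_smul]
            abel
          rw [h3]
          exact W.add_mem (W.smul_mem _ hw'W) (hWY _ hwW)
        have h1 := matprod_eigen' W (Y * T) hYT (fun i => (Z i)⁻¹) v (t⁻¹ * μ) heig
        rwa [← hDX, ← Matrix.mulVec_mulVec] at h1
    rw [eq_top_iff]
    intro v _
    have := key (Submodule.Quotient.mk v)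
    rwa [Submodule.Quotient.mk_eq_zero] at this
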